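/- Let κ > −1 be a real number and λ a complex number with Re λ < 1+κ. Then the ratio C(λ+n−2, n−1) / C(n−1+κ, n−1) tends to 0 as n → ∞. (This is the key estimate showing that the contributions of the subdominant roots of the indicial equation to the probability mass function of the initial bucket size vanish asymptotically.) -/

import Mathlib

open Filter

/-- The generalized binomial coefficient `C(x, n) = x(x-1)⋯(x-n+1)/n!` over `ℂ`. -/
noncomputable def genBinomC (x : ℂ) (n : ℕ) : ℂ :=
    (∏ i ∈ Finset.range n, (x - i)) / (n.factorial : ℂ)

/-- For real `κ > -1` and complex `λ` with `Re λ < 1+κ`, the ratio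
`C(λ+n-2, n-1)/C(n-1+κ, n-1)` tends to `0` as `n → ∞`.  (Written with `n` replaced by `n+1` so
as to index by `n ∈ ℕ`: `C(λ+n-1, n)/C(n+κ, n) → 0`.) -/
lemma prodQ_ne_zero (κ : ℝ) (hκ : -1 < κ) (n : ℕ) :
    (∏ j ∈ Finset.range n, ((κ : ℂ) + 1 + j)) ≠ 0 := by
  rw [Finset.prod_ne_zero_iff]
  intro j _
  intro h
  have := congrArg Complex.re h
  simp [Complex.add_re] at this
  have h0 : (0:ℝ) < κ + 1 + j := by have hj : (0:ℝ) ≤ (j:ℝ) := Nat.cast_nonneg j; linarith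
  linarith

lemma ratio_eq (κ : ℝ) (hκ : -1 < κ) (lam : ℂ) (n : ℕ) (hn : 1 ≤ n) :
    genBinomC (lam + (n : ℂ) - 1) n / genBinomC ((n : ℂ) + (κ : ℂ)) n
      = (∏ j ∈ Finset.range n, (lam + j)) / (∏ j ∈ Finset.range n, ((κ : ℂ) + 1 + j)) := by
  have h1 : (∏ i ∈ Finset.range n, (lam + (n : ℂ) - 1 - i))
      = ∏ j ∈ Finset.range n, (lam + j) := by
    rw [← Finset.prod_range_reflect (fun j => lam + (j:ℂ)) n]
    refine Finset.prod_congr rfl fun i hi => ?_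
    rw [Finset.mem_range] at hi
    have h2 : i ≤ n - 1 := by omega
    have : ((n - 1 - i : ℕ) : ℂ) = (n : ℂ) - 1 - i := by
      push_cast [Nat.cast_sub h2, Nat.cast_sub (by omega : 1 ≤ n)]
      ring
    rw [this]; ring
  have h2 : (∏ i ∈ Finset.range n, ((n : ℂ) + κ - i))
      = ∏ j ∈ Finset.range n, ((κ : ℂ) + 1 + j) := by
    rw [← Finset.prod_range_reflect (fun j => (κ:ℂ) + 1 + (j:ℂ)) n]
    refine Finset.prod_congr rfl fun i hi => ?_
    rw [Finset.mem_range] at hi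
    have h2 : i ≤ n - 1 := by omega
    have : ((n - 1 - i : ℕ) : ℂ) = (n : ℂ) - 1 - i := by
      push_cast [Nat.cast_sub h2, Nat.cast_sub (by omega : 1 ≤ n)]
      ring
    rw [this]; ring
  rw [genBinomC, genBinomC, h1, h2, div_div_div_comm, div_self (by
    exact_mod_cast Nat.factorial_ne_zero n), div_one]

lemma key_eq (κ : ℝ) (hκ : -1 < κ) (lam : ℂ) (hne : ∀ m : ℕ, lam ≠ -m) (n : ℕ) (hn : 1 ≤ n) :
    (∏ j ∈ Finset.range (n+1), (lam + j)) / (∏ j ∈ Finset.range (n+1), ((κ : ℂ) + 1 + j))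
      = (n : ℂ) ^ (lam - ((κ:ℂ) + 1)) *
        (Complex.GammaSeq ((κ:ℂ)+1) n / Complex.GammaSeq lam n) := by
  have hQκ : (∏ j ∈ Finset.range (n+1), (((κ:ℂ)+1) + j)) ≠ 0 := by
    have := prodQ_ne_zero κ hκ (n+1)
    simpa [add_assoc, add_comm, add_left_comm] using this
  have hQl : (∏ j ∈ Finset.range (n+1), (lam + j)) ≠ 0 := by
    rw [Finset.prod_ne_zero_iff]
    intro j _ h
    exact hne j (by linear_combination h)
  have hnc : (n : ℂ) ≠ 0 := Nat.cast_ne_zero.mpr (by omega)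
  have hfc : ((n.factorial : ℕ) : ℂ) ≠ 0 := Nat.cast_ne_zero.mpr (Nat.factorial_ne_zero n)
  have hcpow : (n:ℂ) ^ (lam - ((κ:ℂ)+1)) * (n:ℂ) ^ ((κ:ℂ)+1) = (n:ℂ) ^ lam := by
    rw [← Complex.cpow_add _ _ hnc]; ring_nf
  have hκc : (∏ j ∈ Finset.range (n+1), ((κ:ℂ) + 1 + j))
      = ∏ j ∈ Finset.range (n+1), (((κ:ℂ)+1) + j) := by
    refine Finset.prod_congr rfl fun j _ => by ring
  rw [hκc, Complex.GammaSeq, Complex.GammaSeq]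
  have hpl : (n:ℂ) ^ lam ≠ 0 := by
    simp [Complex.cpow_eq_zero_iff, hnc]
  field_simp
  rw [← hcpow]

theorem subdominant_root_ratio_vanishes (κ : ℝ) (hκ : -1 < κ) (lam : ℂ)
    (hlam : lam.re < 1 + κ) :
    Tendsto (fun n : ℕ => genBinomC (lam + (n : ℂ) - 1) n / genBinomC ((n : ℂ) + (κ : ℂ)) n)
      atTop (nhds 0) := by
  have main : Tendsto (fun n : ℕ =>
      (∏ j ∈ Finset.range (n+1), (lam + j)) / (∏ j ∈ Finset.range (n+1), ((κ:ℂ) + 1 + j)))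
      atTop (nhds 0) := by
    by_cases hz : ∃ m : ℕ, lam = -m
    · obtain ⟨m, rfl⟩ := hz
      apply Tendsto.congr' _ tendsto_const_nhds
      filter_upwards [eventually_ge_atTop m] with n hn
      symm
      rw [div_eq_zero_iff]
      left
      apply Finset.prod_eq_zero (Finset.mem_range.mpr (by omega : m < n + 1))
      ring
    · push_neg at hz
      have h1 : Tendsto (fun n : ℕ => (n:ℂ) ^ (lam - ((κ:ℂ)+1))) atTop (nhds 0) := by
        rw [tendsto_zero_iff_norm_tendsto_zero]
        have hre : (0:ℝ) < (κ + 1) - lam.re := by linarith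
        have h2 : Tendsto (fun n : ℕ => (n:ℝ) ^ (-((κ + 1) - lam.re))) atTop (nhds 0) :=
          (tendsto_rpow_neg_atTop hre).comp tendsto_natCast_atTop_atTop
        apply Tendsto.congr' _ h2
        filter_upwards [eventually_ge_atTop 1] with n hn
        have hn0 : (0:ℝ) < (n:ℝ) := by exact_mod_cast hn
        symm
        rw [show ((n:ℕ):ℂ) = ((n:ℝ):ℂ) by push_cast; ring,
          Complex.norm_cpow_eq_rpow_re_of_pos hn0]
        congr 1
        simp [Complex.sub_re, Complex.add_re]
      have h2 : Tendsto (fun n : ℕ => Complex.GammaSeq ((κ:ℂ)+1) n / Complex.GammaSeq lam n)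
          atTop (nhds (Complex.Gamma ((κ:ℂ)+1) / Complex.Gamma lam)) :=
        (Complex.GammaSeq_tendsto_Gamma _).div (Complex.GammaSeq_tendsto_Gamma _)
          (Complex.Gamma_ne_zero hz)
      have h3 := h1.mul h2
      rw [zero_mul] at h3
      apply Tendsto.congr' _ h3
      filter_upwards [eventually_ge_atTop 1] with n hn
      exact (key_eq κ hκ lam hz n hn).symm
  rw [← Filter.tendsto_add_atTop_iff_nat 1]
  refine main.congr fun n => ?_
  rw [ratio_eq κ hκ lam (n+1) (by omega)]
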